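/- Let X be a real normed space, Y a real topological vector space, λ > 0, and let π : X → Y be a quotient map satisfying condition (★) with exponent λ. If φ : Y → X is an intrinsically L-Lipschitz section of π, then for every α ∈ ℝ \ {0} the map αφ : Y → X is an intrinsically L-Lipschitz section of the map (1/α^[λ])·π; that is, (1/α^[λ])·π(αφ(y)) = y for all y ∈ Y, and ‖αφ(y) − αφ(z)‖ ≤ L·dist(αφ(y), ((1/α^[λ])π)⁻¹(z)) for all y, z ∈ Y, where ((1/α^[λ])π)⁻¹(z) := {x ∈ X : π(x) = α^[λ]·z}. -/

import Mathlib

/-- Signed power: `α^[λ] := sign(α)·|α|^λ`. -/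
noncomputable def spow (α lam : ℝ) : ℝ := Real.sign α * |α| ^ lam

open Pointwise

/-- If `π : X → Y` is a quotient map satisfying condition (★) with exponent `λ > 0`
and `φ` is an intrinsically `L`-Lipschitz section of `π`, then for every `α ≠ 0`
the map `αφ` is an intrinsically `L`-Lipschitz section of `(1/α^[λ])·π`. -/
theorem statement_2 {X Y : Type*} [NormedAddCommGroup X] [NormedSpace ℝ X]
    [AddCommGroup Y] [Module ℝ Y] [TopologicalSpace Y]
    [IsTopologicalAddGroup Y] [ContinuousSMul ℝ Y]
    (lam : ℝ) (hlam : 0 < lam) (π : X → Y)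
    (hcont : Continuous π) (hopen : IsOpenMap π) (hsurj : Function.Surjective π)
    (hstar : ∀ x₁ x₂ : X, ∀ α β : ℝ, (α, β) ≠ (0, 0) →
      π (α • x₁ + β • x₂) = spow α lam • π x₁ + spow β lam • π x₂)
    (φ : Y → X) (L : ℝ) (hL : 1 ≤ L)
    (hsec : ∀ y, π (φ y) = y)
    (hlip : ∀ y₁ y₂ : Y, dist (φ y₁) (φ y₂) ≤ L * Metric.infDist (φ y₁) (π ⁻¹' {y₂}))
    (α : ℝ) (hα : α ≠ 0) :
    (∀ y : Y, (spow α lam)⁻¹ • π (α • φ y) = y) ∧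
    (∀ y z : Y, ‖α • φ y - α • φ z‖ ≤
      L * Metric.infDist (α • φ y) {x : X | π x = spow α lam • z}) := by
  have hs0 : spow (0:ℝ) lam = 0 := by simp [spow]
  have hsα : spow α lam ≠ 0 := by
    simp only [spow]
    exact mul_ne_zero (fun h => hα (Real.sign_eq_zero_iff.mp h))
      (ne_of_gt (Real.rpow_pos_of_pos (abs_pos.2 hα) lam))
  have hsmul : ∀ x : X, π (α • x) = spow α lam • π x := by
    intro x
    have := hstar x x α 0 (by simp [hα])
    simpa [hs0] using this
  constructor
  · intro y
    rw [hsmul, hsec, inv_smul_smul₀ hsα]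
  · intro y z
    have hset : {x : X | π x = spow α lam • z} = α • (π ⁻¹' {z}) := by
      ext x
      constructor
      · intro hx
        refine ⟨α⁻¹ • x, ?_, by simp [smul_smul, hα]⟩
        have h1 : π (α • (α⁻¹ • x)) = spow α lam • π (α⁻¹ • x) := hsmul _
        rw [smul_inv_smul₀ hα, hx] at h1
        have h2 : π (α⁻¹ • x) = z := by
          have := congrArg (fun w => (spow α lam)⁻¹ • w) h1
          simpa [inv_smul_smul₀ hsα] using this.symm
        simpa using h2
      · rintro ⟨w, hw, rfl⟩
        simp only [Set.mem_preimage, Set.mem_singleton_iff] at hw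
        simp [Set.mem_setOf_eq, hsmul, hw]
    rw [hset, infDist_smul₀ hα]
    rw [← smul_sub, norm_smul, Real.norm_eq_abs]
    have := mul_le_mul_of_nonneg_left (hlip y z) (abs_nonneg α)
    rw [dist_eq_norm] at this
    calc |α| * ‖φ y - φ z‖ ≤ |α| * (L * Metric.infDist (φ y) (π ⁻¹' {z})) := this
      _ = L * (|α| * Metric.infDist (φ y) (π ⁻¹' {z})) := by ring
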